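/- If a random unit vector a ∈ ℝ³ is uniformly distributed on the unit sphere, γ is a random angle with arbitrary distribution independent of a, and x ∈ ℝ³ is a fixed unit vector, then for any angle β the random vector M(β x)·M(γ a)·x has the same distribution as y = M(γ a)·x; i.e., the law of y is invariant under rotations about the axis x. -/
import Mathlib


open Matrix MeasureTheory ProbabilityTheory

/-- The cross-product matrix `[a]×`. -/
def crossMat (a : Fin 3 → ℝ) : Matrix (Fin 3) (Fin 3) ℝ :=
  !![0, -a 2, a 1; a 2, 0, -a 0; -a 1, a 0, 0]

/-- `M(θa) = I₃ + sin(2θ)[a]× + (1 − cos(2θ))[a]×²`. -/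
noncomputable def Mrot (θ : ℝ) (a : Fin 3 → ℝ) : Matrix (Fin 3) (Fin 3) ℝ :=
  1 + Real.sin (2 * θ) • crossMat a + (1 - Real.cos (2 * θ)) • (crossMat a * crossMat a)

/-- The uniform (normalized rotation-invariant) probability distribution on the unit
sphere `S² ⊂ ℝ³`, characterized as a rotation-invariant probability measure carried by
the unit sphere. -/
def IsUniformOnSphere (ν : MeasureTheory.Measure (Fin 3 → ℝ)) : Prop :=
  MeasureTheory.IsProbabilityMeasure ν ∧
  (∀ᵐ v ∂ν, v 0 ^ 2 + v 1 ^ 2 + v 2 ^ 2 = 1) ∧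
  ∀ Q : Matrix (Fin 3) (Fin 3) ℝ, Q * Qᵀ = 1 → Q.det = 1 → ν.map Q.mulVec = ν

/-- Closed form for `Mrot`. -/
lemma Mrot_eq' (θ : ℝ) (a : Fin 3 → ℝ) :
    Mrot θ a =
      !![1 - (1 - Real.cos (2*θ)) * (a 1^2 + a 2^2),
         -Real.sin (2*θ) * a 2 + (1 - Real.cos (2*θ)) * a 0 * a 1,
         Real.sin (2*θ) * a 1 + (1 - Real.cos (2*θ)) * a 0 * a 2;
         Real.sin (2*θ) * a 2 + (1 - Real.cos (2*θ)) * a 0 * a 1,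
         1 - (1 - Real.cos (2*θ)) * (a 0^2 + a 2^2),
         -Real.sin (2*θ) * a 0 + (1 - Real.cos (2*θ)) * a 1 * a 2;
         -Real.sin (2*θ) * a 1 + (1 - Real.cos (2*θ)) * a 0 * a 2,
         Real.sin (2*θ) * a 0 + (1 - Real.cos (2*θ)) * a 1 * a 2,
         1 - (1 - Real.cos (2*θ)) * (a 0^2 + a 1^2)] := by
  ext i j
  fin_cases i <;> fin_cases j <;>
    simp [Mrot, crossMat, mul_apply, one_apply, Fin.sum_univ_three] <;> ring

/-- Polynomial identity: `Aᵀ [Aa]× A = det A • [a]×`. -/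
lemma crossMat_conj (A : Matrix (Fin 3) (Fin 3) ℝ) (a : Fin 3 → ℝ) :
    Aᵀ * crossMat (A.mulVec a) * A = A.det • crossMat a := by
  ext i j
  fin_cases i <;> fin_cases j <;>
    simp [crossMat, mul_apply, mulVec, dotProduct, Fin.sum_univ_three, det_fin_three,
      transpose_apply] <;> ring

lemma Mrot_transpose' (β : ℝ) (x : Fin 3 → ℝ) : (Mrot β x)ᵀ = Mrot (-β) x := by
  ext i j
  rw [transpose_apply, Mrot_eq', Mrot_eq']
  fin_cases i <;> fin_cases j <;>
    simp [show (2:ℝ) * -β = -(2*β) by ring, Real.sin_neg, Real.cos_neg] <;> ring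

set_option linter.unreachableTactic false in
set_option linter.unusedTactic false in
lemma Mrot_orth' (β : ℝ) (x : Fin 3 → ℝ) (hx : x 0 ^ 2 + x 1 ^ 2 + x 2 ^ 2 = 1) :
    Mrot β x * (Mrot β x)ᵀ = 1 := by
  have hs := Real.sin_sq_add_cos_sq (2 * β)
  rw [Mrot_transpose']
  ext i j
  rw [Mrot_eq', Mrot_eq']
  fin_cases i <;> fin_cases j <;>
    simp [mul_apply, one_apply, Fin.sum_univ_three,
      show (2:ℝ) * -β = -(2*β) by ring, Real.sin_neg, Real.cos_neg] <;>
    first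
      | linear_combination ((x 1 ^ 2 + x 2 ^ 2) * (1 - Real.cos (2*β)) ^ 2) * hx + (x 1 ^ 2 + x 2 ^ 2) * hs
      | linear_combination ((x 0 ^ 2 + x 2 ^ 2) * (1 - Real.cos (2*β)) ^ 2) * hx + (x 0 ^ 2 + x 2 ^ 2) * hs
      | linear_combination ((x 0 ^ 2 + x 1 ^ 2) * (1 - Real.cos (2*β)) ^ 2) * hx + (x 0 ^ 2 + x 1 ^ 2) * hs
      | linear_combination (-(x 0 * x 1) * (1 - Real.cos (2*β)) ^ 2) * hx + (-(x 0 * x 1)) * hs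
      | linear_combination (-(x 0 * x 2) * (1 - Real.cos (2*β)) ^ 2) * hx + (-(x 0 * x 2)) * hs
      | linear_combination (-(x 1 * x 2) * (1 - Real.cos (2*β)) ^ 2) * hx + (-(x 1 * x 2)) * hs
      | linear_combination ((x 0 * x 1) * (1 - Real.cos (2*β)) ^ 2) * hx + ((x 0 * x 1)) * hs
      | linear_combination ((x 0 * x 2) * (1 - Real.cos (2*β)) ^ 2) * hx + ((x 0 * x 2)) * hs
      | linear_combination ((x 1 * x 2) * (1 - Real.cos (2*β)) ^ 2) * hx + ((x 1 * x 2)) * hs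

lemma Mrot_det' (β : ℝ) (x : Fin 3 → ℝ) (hx : x 0 ^ 2 + x 1 ^ 2 + x 2 ^ 2 = 1) :
    (Mrot β x).det = 1 := by
  have hs := Real.sin_sq_add_cos_sq (2 * β)
  rw [Mrot_eq', det_fin_three]
  simp only [Matrix.cons_val', Matrix.cons_val_zero, Matrix.cons_val_one, Matrix.head_cons,
    Matrix.empty_val', Matrix.cons_val_fin_one, Matrix.head_fin_const, Matrix.of_apply,
    Matrix.cons_val_two, Matrix.tail_cons]
  linear_combination ((x 0^2 + x 1^2 + x 2^2) * (1 - Real.cos (2*β)) ^ 2) * hx + (x 0^2 + x 1^2 + x 2^2) * hs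

lemma Mrot_fix' (β : ℝ) (x : Fin 3 → ℝ) : (Mrot β x).mulVec x = x := by
  funext i
  rw [Mrot_eq']
  fin_cases i <;> simp [mulVec, dotProduct, Fin.sum_univ_three] <;> ring

/-- Conjugating `Mrot θ a` by a rotation `Q` gives `Mrot θ (Qa)`. -/
lemma Mrot_conj' (Q : Matrix (Fin 3) (Fin 3) ℝ) (hQ : Q * Qᵀ = 1) (hd : Q.det = 1)
    (a : Fin 3 → ℝ) (θ : ℝ) : Q * Mrot θ a * Qᵀ = Mrot θ (Q.mulVec a) := by
  have hQt : Qᵀ * Q = 1 := mul_eq_one_comm.mp hQ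
  have hK : Q * crossMat a * Qᵀ = crossMat (Q.mulVec a) := by
    have h := crossMat_conj Q a
    rw [hd, one_smul] at h
    calc Q * crossMat a * Qᵀ = Q * (Qᵀ * crossMat (Q.mulVec a) * Q) * Qᵀ := by rw [h]
    _ = (Q * Qᵀ) * crossMat (Q.mulVec a) * (Q * Qᵀ) := by noncomm_ring
    _ = crossMat (Q.mulVec a) := by rw [hQ]; simp
  have hK2 : Q * (crossMat a * crossMat a) * Qᵀ
      = crossMat (Q.mulVec a) * crossMat (Q.mulVec a) := by
    calc Q * (crossMat a * crossMat a) * Qᵀ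
        = (Q * crossMat a * Qᵀ) * (Q * crossMat a * Qᵀ) := by
          rw [show (Q * crossMat a * Qᵀ) * (Q * crossMat a * Qᵀ)
              = Q * crossMat a * (Qᵀ * Q) * crossMat a * Qᵀ by noncomm_ring, hQt]
          noncomm_ring
    _ = _ := by rw [hK]
  simp only [Mrot, add_mul, mul_add, Matrix.mul_smul, Matrix.smul_mul, mul_one, one_mul]
  rw [hQ, hK, hK2]

lemma measurable_mulVec' (Q : Matrix (Fin 3) (Fin 3) ℝ) :
    Measurable (fun v : Fin 3 → ℝ => Q.mulVec v) := by
  apply measurable_pi_lambda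
  intro i
  simp only [mulVec, dotProduct, Fin.sum_univ_three]
  fun_prop

lemma measurable_f' (x : Fin 3 → ℝ) :
    Measurable (fun p : ℝ × (Fin 3 → ℝ) => (Mrot p.1 p.2).mulVec x) := by
  apply measurable_pi_lambda
  intro i
  simp only [Mrot_eq', mulVec, dotProduct, Fin.sum_univ_three]
  fin_cases i <;>
    · simp only [Matrix.cons_val', Matrix.cons_val_zero, Matrix.cons_val_one, Matrix.head_cons,
        Matrix.empty_val', Matrix.cons_val_fin_one, Matrix.head_fin_const, Matrix.of_apply,
        Matrix.cons_val_two, Matrix.tail_cons, Fin.mk_zero, Fin.mk_one,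
        show (⟨2, by norm_num⟩ : Fin 3) = 2 from rfl]
      fun_prop

/-- If `a` is uniform on the sphere, `γ` is an independent random angle and `x` a fixed
unit vector, then for any angle `β` the vector `M(βx)·M(γa)·x` has the same distribution
as `y = M(γa)·x`: the law of `y` is invariant under rotations about `x`. -/
theorem law_invariant_about_axis {Ω : Type*} [MeasurableSpace Ω]
    (μ : Measure Ω) [IsProbabilityMeasure μ]
    (a : Ω → (Fin 3 → ℝ)) (γ : Ω → ℝ) (ha : Measurable a) (hγ : Measurable γ)
    (haU : IsUniformOnSphere (μ.map a)) (hindep : IndepFun γ a μ)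
    (x : Fin 3 → ℝ) (hx : x 0 ^ 2 + x 1 ^ 2 + x 2 ^ 2 = 1) (β : ℝ) :
    μ.map (fun ω => (Mrot β x).mulVec ((Mrot (γ ω) (a ω)).mulVec x)) =
      μ.map (fun ω => (Mrot (γ ω) (a ω)).mulVec x) := by
  set Q := Mrot β x with hQdef
  have hQO := Mrot_orth' β x hx
  have hQd := Mrot_det' β x hx
  -- pointwise identity
  have hpt : ∀ (θ : ℝ) (v : Fin 3 → ℝ),
      Q.mulVec ((Mrot θ v).mulVec x) = (Mrot θ (Q.mulVec v)).mulVec x := by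
    intro θ v
    have hQt : Qᵀ * Q = 1 := mul_eq_one_comm.mp hQO
    have hcom : Q * Mrot θ v = Mrot θ (Q.mulVec v) * Q := by
      calc Q * Mrot θ v = Q * Mrot θ v * (Qᵀ * Q) := by rw [hQt, mul_one]
      _ = (Q * Mrot θ v * Qᵀ) * Q := by noncomm_ring
      _ = _ := by rw [Mrot_conj' Q hQO hQd]
    rw [Matrix.mulVec_mulVec, hcom, ← Matrix.mulVec_mulVec, Mrot_fix']
  -- laws
  have hQm := measurable_mulVec' Q
  set b : Ω → (Fin 3 → ℝ) := fun ω => Q.mulVec (a ω) with hbdef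
  have hb : Measurable b := hQm.comp ha
  have hlawb : μ.map b = μ.map a := by
    rw [hbdef]
    rw [show (fun ω => Q.mulVec (a ω)) = (fun v => Q.mulVec v) ∘ a from rfl,
      ← Measure.map_map hQm ha, haU.2.2 Q hQO hQd]
  have hindb : IndepFun γ b μ := hindep.comp measurable_id hQm
  have hf := measurable_f' x
  haveI : IsProbabilityMeasure (μ.map a) := haU.1
  haveI : IsProbabilityMeasure (μ.map γ) := Measure.isProbabilityMeasure_map hγ.aemeasurable
  have hjb := (indepFun_iff_map_prod_eq_prod_map_map hγ.aemeasurable hb.aemeasurable).mp hindb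
  have hja := (indepFun_iff_map_prod_eq_prod_map_map hγ.aemeasurable ha.aemeasurable).mp hindep
  calc μ.map (fun ω => Q.mulVec ((Mrot (γ ω) (a ω)).mulVec x))
      = μ.map (fun ω => (Mrot (γ ω) (b ω)).mulVec x) := by
        congr 1; funext ω; exact hpt (γ ω) (a ω)
    _ = μ.map ((fun p : ℝ × (Fin 3 → ℝ) => (Mrot p.1 p.2).mulVec x) ∘ (fun ω => (γ ω, b ω))) := rfl
    _ = (μ.map (fun ω => (γ ω, b ω))).map (fun p : ℝ × (Fin 3 → ℝ) => (Mrot p.1 p.2).mulVec x) :=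
        (Measure.map_map hf (hγ.prodMk hb)).symm
    _ = ((μ.map γ).prod (μ.map b)).map (fun p : ℝ × (Fin 3 → ℝ) => (Mrot p.1 p.2).mulVec x) := by
        rw [hjb]
    _ = ((μ.map γ).prod (μ.map a)).map (fun p : ℝ × (Fin 3 → ℝ) => (Mrot p.1 p.2).mulVec x) := by
        rw [hlawb]
    _ = (μ.map (fun ω => (γ ω, a ω))).map (fun p : ℝ × (Fin 3 → ℝ) => (Mrot p.1 p.2).mulVec x) := by
        rw [hja]
    _ = μ.map (fun ω => (Mrot (γ ω) (a ω)).mulVec x) :=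
        Measure.map_map hf (hγ.prodMk ha)
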